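/- Let L and P be countable dcpo's, let U ∈ σ(L) with enumeration U = {xₙ : n ∈ ℕ}, and for each n ∈ ℕ let (Wₖ)_{k∈ℕ} be a sequence of Scott open subsets of L such that {xᵢ : i ≤ k} ⊆ Wₖ for every k. Then for every n ∈ ℕ the set Uₙ = (⋂_{k≥n} Wₖ) ∩ U is Scott open in L, and U = ⋃_{n∈ℕ} Uₙ. -/
import Mathlib


/-- A poset is a dcpo if every nonempty directed subset has a least upper bound. -/
def IsDcpo (α : Type*) [Preorder α] : Prop :=
  ∀ D : Set α, D.Nonempty → DirectedOn (· ≤ ·) D → ∃ u, IsLUB D u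

/-- A subset of a poset is Scott open if it is an upper set which is inaccessible by
suprema of directed sets. -/
def IsScottOpen {α : Type*} [Preorder α] (U : Set α) : Prop :=
  IsUpperSet U ∧ DirSupInacc U

/-- Let `L`, `P` be countable dcpo's, `U ∈ σ(L)` with enumeration
`U = {xₙ : n ∈ ℕ}`, and let `(Wₖ)ₖ` be a sequence of Scott open subsets of `L` with
`{xᵢ : i ≤ k} ⊆ Wₖ` for every `k`. Then for every `n` the set
`Uₙ = (⋂_{k ≥ n} Wₖ) ∩ U` is Scott open in `L`, and `U = ⋃ₙ Uₙ`. -/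
theorem inter_tail_scottOpen_and_union_eq
    (L P : Type) [PartialOrder L] [PartialOrder P] [Countable L] [Countable P]
    (hL : IsDcpo L) (hP : IsDcpo P)
    (U : Set L) (hU : IsScottOpen U) (x : ℕ → L) (hx : U = Set.range x)
    (W : ℕ → Set L) (hW : ∀ k, IsScottOpen (W k)) (hWx : ∀ k, ∀ i ≤ k, x i ∈ W k) :
    (∀ n : ℕ, IsScottOpen ((⋂ k ∈ {k : ℕ | n ≤ k}, W k) ∩ U)) ∧
    U = ⋃ n : ℕ, (⋂ k ∈ {k : ℕ | n ≤ k}, W k) ∩ U := by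
  constructor
  · intro n
    constructor
    · -- upper set
      intro a b hab ha
      exact ⟨Set.mem_iInter₂.mpr fun k hk => (hW k).1 hab (Set.mem_iInter₂.mp ha.1 k hk),
        hU.1 hab ha.2⟩
    · -- inaccessibility
      intro D hDne hDdir a hlub ha
      obtain ⟨haW, haU⟩ := ha
      simp only [Set.mem_iInter, Set.mem_setOf_eq] at haW
      obtain ⟨d, hdD, hdU⟩ := hU.2 hDne hDdir hlub haU
      obtain ⟨j, hj⟩ := hx ▸ hdU
      -- d = x j; find an upper bound of d in D lying in W k for n ≤ k < j
      have key : ∀ m : ℕ, ∃ d' ∈ D, d ≤ d' ∧ ∀ k, n ≤ k → k < m → d' ∈ W k := by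
        intro m
        induction m with
        | zero => exact ⟨d, hdD, le_refl d, fun k _ hk => absurd hk (Nat.not_lt_zero k)⟩
        | succ m ih =>
          obtain ⟨d', hd'D, hdd', hd'W⟩ := ih
          by_cases hnm : n ≤ m
          · obtain ⟨e, heD, heW⟩ := (hW m).2 hDne hDdir hlub (haW m hnm)
            obtain ⟨f, hfD, hd'f, hef⟩ := hDdir d' hd'D e heD
            refine ⟨f, hfD, le_trans hdd' hd'f, fun k hk hkm => ?_⟩
            rcases Nat.lt_succ_iff_lt_or_eq.mp hkm with h | h
            · exact (hW k).1 hd'f (hd'W k hk h)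
            · exact h ▸ (hW m).1 hef heW
          · exact ⟨d', hd'D, hdd', fun k hk hkm => hd'W k hk (by omega)⟩
      obtain ⟨d', hd'D, hdd', hd'W⟩ := key j
      refine ⟨d', hd'D, ⟨?_, hU.1 hdd' hdU⟩⟩
      simp only [Set.mem_iInter, Set.mem_setOf_eq]
      intro k hk
      rcases lt_or_ge k j with h | h
      · exact hd'W k hk h
      · exact (hW k).1 (hj ▸ hdd') (hWx k j h)
  · apply Set.Subset.antisymm
    · intro u hu
      obtain ⟨j, hj⟩ := hx ▸ hu
      refine Set.mem_iUnion.mpr ⟨j, ⟨?_, hu⟩⟩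
      simp only [Set.mem_iInter, Set.mem_setOf_eq]
      exact fun k hk => hj ▸ hWx k j hk
    · exact Set.iUnion_subset fun n => Set.inter_subset_right
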